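/- For a monic polynomial f of degree d with Bezout matrices B(1), B(x) of size d, the matrix B(1)^{-1}·B(x) represents the multiplication-by-x operator on ℂ[x]/⟨f⟩ in the Horner basis, and is similar to the companion matrix X via conjugation by B(1). -/

import Mathlib

open MvPolynomial

/-- The companion matrix of `f = a_0 x^d + ⋯ + a_d`: 1's on the subdiagonal and
last column `(-a_d/a_0, …, -a_1/a_0)ᵀ`. -/
noncomputable def companionMatrix (f : Polynomial ℂ) :
    Matrix (Fin f.natDegree) (Fin f.natDegree) ℂ :=
  Matrix.of fun i j =>
    if (j : ℕ) = f.natDegree - 1 then -f.coeff i / f.leadingCoeff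
    else if (i : ℕ) = (j : ℕ) + 1 then 1 else 0

/-- The `k`-th Horner polynomial of `f` (the `k`-th column of `B(1)` read in the
monomial basis). -/
noncomputable def hornerPoly (f : Polynomial ℂ) (k : Fin f.natDegree) : Polynomial ℂ :=
  ∑ j : Fin f.natDegree,
    Polynomial.C (f.coeff ((k : ℕ) + (j : ℕ) + 1)) * Polynomial.X ^ (j : ℕ)

section Aux

lemma XsubX_ne : (X 0 - X 1 : MvPolynomial (Fin 2) ℂ) ≠ 0 := by
  intro h
  have := congrArg (eval (fun i : Fin 2 => if i = 0 then (1:ℂ) else 0)) h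
  simp at this

lemma cancelX {p q : MvPolynomial (Fin 2) ℂ}
    (h : (X 0 - X 1) * p = (X 0 - X 1) * q) : p = q :=
  mul_left_cancel₀ XsubX_ne h


lemma coeff_CXX (c : ℂ) (a b α β : ℕ) :
    coeff (Finsupp.single 0 a + Finsupp.single 1 b) (C c * X (0:Fin 2) ^ α * X 1 ^ β)
      = if a = α ∧ b = β then c else 0 := by
  rw [mul_assoc, X_pow_eq_monomial, X_pow_eq_monomial, monomial_mul, one_mul,
    coeff_C_mul, coeff_monomial]
  by_cases h : a = α ∧ b = β
  · obtain ⟨h1, h2⟩ := h; subst h1; subst h2; simp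
  · have : ¬ (Finsupp.single (0:Fin 2) α + Finsupp.single 1 β
        = Finsupp.single 0 a + Finsupp.single 1 b) := by
      intro he
      apply h
      constructor
      · have := DFunLike.congr_fun he 0
        simpa [Finsupp.single_apply] using this.symm
      · have := DFunLike.congr_fun he 1
        simpa [Finsupp.single_apply] using this.symm
    simp [this, h]

lemma matrix_of_sum_eq {d : ℕ} (A B : Matrix (Fin d) (Fin d) ℂ)
    (h : ∑ α : Fin d, ∑ β : Fin d, C (A α β) * X (0:Fin 2) ^ (α:ℕ) * X 1 ^ (β:ℕ)
       = ∑ α : Fin d, ∑ β : Fin d, C (B α β) * X (0:Fin 2) ^ (α:ℕ) * X 1 ^ (β:ℕ)) :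
    A = B := by
  ext a b
  have key : ∀ M : Matrix (Fin d) (Fin d) ℂ,
      coeff (Finsupp.single 0 (a:ℕ) + Finsupp.single 1 (b:ℕ))
        (∑ α : Fin d, ∑ β : Fin d, C (M α β) * X (0:Fin 2) ^ (α:ℕ) * X 1 ^ (β:ℕ)) = M a b := by
    intro M
    rw [coeff_sum]
    simp_rw [coeff_sum, coeff_CXX]
    rw [Finset.sum_comm]
    rw [Finset.sum_eq_single b]
    · rw [Finset.sum_eq_single a]
      · simp
      · intro c _ hc; simp [Fin.val_eq_val, hc, (Ne.symm hc)]
      · simp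
    · intro c _ hc
      apply Finset.sum_eq_zero
      intro e _
      simp [Fin.val_eq_val, hc, Ne.symm hc]
    · simp
  have := key A
  rw [h, key B] at this
  exact this.symm


lemma S1_spec (f : Polynomial ℂ) :
    (X 0 - X 1) * (∑ α : Fin f.natDegree, ∑ β : Fin f.natDegree,
      C (f.coeff ((α:ℕ)+(β:ℕ)+1)) * X (0: Fin 2) ^ (α:ℕ) * X 1 ^ (β:ℕ)) =
    Polynomial.aeval (X 0) f - Polynomial.aeval (X 1) f := by
  set d := f.natDegree with hdd
  rw [Polynomial.aeval_eq_sum_range' (n := d + 1) (by omega) (X 0),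
      Polynomial.aeval_eq_sum_range' (n := d + 1) (by omega) (X 1),
      ← Finset.sum_sub_distrib]
  have key : ∀ i ∈ Finset.range (d+1),
      f.coeff i • (X 0:MvPolynomial (Fin 2) ℂ) ^ i - f.coeff i • X 1 ^ i
      = (X 0 - X 1) * ∑ k ∈ Finset.range i, f.coeff i • (X 0 ^ k * X 1 ^ (i - 1 - k)) := by
    intro i _
    rw [Finset.mul_sum, ← smul_sub]
    rw [← geom_sum₂_mul (X 0 : MvPolynomial (Fin 2) ℂ) (X 1) i]
    rw [Finset.sum_mul, Finset.smul_sum]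
    apply Finset.sum_congr rfl
    intro k _
    rw [mul_smul_comm]
    ring_nf
  rw [Finset.sum_congr rfl key, ← Finset.mul_sum]
  congr 1
  -- now the reindexing
  rw [Fin.sum_univ_eq_sum_range (fun α => ∑ β : Fin d, C (f.coeff (α+(β:ℕ)+1)) * X (0: Fin 2) ^ α * X 1 ^ (β:ℕ))]
  have inner : ∀ α ∈ Finset.range d, (∑ β : Fin d, C (f.coeff (α+(β:ℕ)+1)) * X (0: Fin 2) ^ α * X 1 ^ (β:ℕ))
      = ∑ β ∈ Finset.range d, C (f.coeff (α+β+1)) * X (0: Fin 2) ^ α * X 1 ^ β := by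
    intro α _
    exact Fin.sum_univ_eq_sum_range (fun β => C (f.coeff (α+β+1)) * X (0: Fin 2) ^ α * X 1 ^ β) d
  rw [Finset.sum_congr rfl inner]
  have shrink : ∀ α ∈ Finset.range d,
      (∑ β ∈ Finset.range d, C (f.coeff (α+β+1)) * X (0: Fin 2) ^ α * X 1 ^ β)
      = ∑ β ∈ Finset.range (d - α), C (f.coeff (α+β+1)) * X (0: Fin 2) ^ α * X 1 ^ β := by
    intro α hα
    simp only [Finset.mem_range] at hα
    refine (Finset.sum_subset (Finset.range_subset_range.mpr (by omega)) ?_).symm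
    intro β _ hβ
    simp only [Finset.mem_range, not_lt] at hβ
    rw [Polynomial.coeff_eq_zero_of_natDegree_lt (by omega)]
    simp
  rw [Finset.sum_congr rfl shrink]
  rw [Finset.sum_sigma', Finset.sum_sigma']
  apply Finset.sum_nbij' (i := fun p => ⟨p.1 + p.2 + 1, p.1⟩)
    (j := fun p => ⟨p.2, p.1 - 1 - p.2⟩)
  · intro p hp
    simp only [Finset.mem_sigma, Finset.mem_range] at hp ⊢
    omega
  · intro p hp
    simp only [Finset.mem_sigma, Finset.mem_range] at hp ⊢
    omega
  · intro p hp
    simp only [Finset.mem_sigma, Finset.mem_range] at hp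
    ext <;> simp <;> omega
  · intro p hp
    simp only [Finset.mem_sigma, Finset.mem_range] at hp
    ext <;> simp <;> omega
  · intro p hp
    simp only [Finset.mem_sigma, Finset.mem_range] at hp
    have : p.1 + p.2 + 1 - 1 - p.1 = p.2 := by omega
    rw [this, smul_eq_C_mul, mul_assoc]

noncomputable def b1M (f : Polynomial ℂ) : Matrix (Fin f.natDegree) (Fin f.natDegree) ℂ :=
  fun α β => f.coeff ((α:ℕ)+(β:ℕ)+1)

noncomputable def bxM (f : Polynomial ℂ) : Matrix (Fin f.natDegree) (Fin f.natDegree) ℂ :=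
  fun α β => if (α:ℕ) = 0 then (if (β:ℕ) = 0 then -f.coeff 0 else 0)
    else (if (β:ℕ) = 0 then 0 else f.coeff ((α:ℕ)+(β:ℕ)))

lemma SxSum_eq (f : Polynomial ℂ) (hd : 1 ≤ f.natDegree) :
    (∑ α : Fin f.natDegree, ∑ β : Fin f.natDegree,
      C (bxM f α β) * X (0:Fin 2) ^ (α:ℕ) * X 1 ^ (β:ℕ))
    = X 1 * (∑ α : Fin f.natDegree, ∑ β : Fin f.natDegree,
      C (f.coeff ((α:ℕ)+(β:ℕ)+1)) * X (0:Fin 2) ^ (α:ℕ) * X 1 ^ (β:ℕ))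
      - Polynomial.aeval (X 1) f := by
  set d := f.natDegree with hdd
  obtain ⟨e, he⟩ : ∃ e, d = e + 1 := ⟨d - 1, by omega⟩
  have hX1 : Polynomial.aeval (X 1 : MvPolynomial (Fin 2) ℂ) f
      = ∑ i ∈ Finset.range (d+1), C (f.coeff i) * X 1 ^ i := by
    rw [Polynomial.aeval_eq_sum_range' (n := d + 1) (by omega) (X 1)]
    exact Finset.sum_congr rfl fun i _ => by rw [smul_eq_C_mul]
  rw [hX1, Finset.mul_sum]
  set g : Fin d → MvPolynomial (Fin 2) ℂ := fun α =>
    ∑ β : Fin d, C (bxM f α β) * X (0:Fin 2) ^ (α:ℕ) * X 1 ^ (β:ℕ) with hg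
  set h : Fin d → MvPolynomial (Fin 2) ℂ := fun α =>
    X 1 * ∑ β : Fin d, C (f.coeff ((α:ℕ)+(β:ℕ)+1)) * X (0:Fin 2) ^ (α:ℕ) * X 1 ^ (β:ℕ) with hh
  have hhα : ∀ α : Fin d, h α = ∑ β ∈ Finset.range d,
      C (f.coeff ((α:ℕ)+β+1)) * X (0:Fin 2) ^ (α:ℕ) * X 1 ^ (β+1) := by
    intro α
    rw [hh]
    simp only [Finset.mul_sum]
    rw [Fin.sum_univ_eq_sum_range
      (fun β => X 1 * (C (f.coeff ((α:ℕ)+β+1)) * X (0:Fin 2) ^ (α:ℕ) * X 1 ^ β))]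
    exact Finset.sum_congr rfl fun i _ => by ring
  have key : ∑ α : Fin d, (h α - g α) = ∑ i ∈ Finset.range (d+1), C (f.coeff i) * X 1 ^ i := by
    rw [Finset.sum_eq_single (⟨0, by omega⟩ : Fin d)]
    · -- h 0 - g 0 = F
      have hg0 : g ⟨0, by omega⟩ = - C (f.coeff 0) := by
        rw [hg]
        simp only
        rw [Finset.sum_eq_single (⟨0, by omega⟩ : Fin d)]
        · simp [bxM, map_neg]
        · intro c _ hc
          have : (c:ℕ) ≠ 0 := fun h0 => hc (by ext; simpa using h0)
          simp [bxM, this]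
        · simp
      rw [hg0, hhα, Finset.sum_range_succ' (fun i => C (f.coeff i) * X 1 ^ i)]
      simp only [pow_zero, mul_one, Fin.val_mk, zero_add]
      ring
    · -- α ≠ 0 : h α - g α = 0
      intro α _ hα
      have hα0 : (α:ℕ) ≠ 0 := fun h0 => hα (by ext; simpa using h0)
      have hgα : g α = ∑ β ∈ Finset.range e,
          C (f.coeff ((α:ℕ)+(β+1))) * X (0:Fin 2) ^ (α:ℕ) * X 1 ^ (β+1) := by
        rw [hg]
        simp only [bxM, if_neg hα0]
        rw [Fin.sum_univ_eq_sum_range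
          (fun β => C (if β = 0 then 0 else f.coeff ((α:ℕ)+β)) * X (0:Fin 2) ^ (α:ℕ) * X 1 ^ β)]
        rw [show Finset.range d = Finset.range (e+1) from by rw [he], Finset.sum_range_succ'
          (fun β => C (if β = 0 then 0 else f.coeff ((α:ℕ)+β)) * X (0:Fin 2) ^ (α:ℕ) * X 1 ^ β)]
        simp [add_assoc]
      have hhα' : h α = (∑ β ∈ Finset.range e,
          C (f.coeff ((α:ℕ)+(β+1))) * X (0:Fin 2) ^ (α:ℕ) * X 1 ^ (β+1)) := by
        rw [hhα α, show Finset.range d = Finset.range (e+1) from by rw [he], Finset.sum_range_succ]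
        have : f.coeff ((α:ℕ)+e+1) = 0 := by
          apply Polynomial.coeff_eq_zero_of_natDegree_lt
          have := α.isLt
          omega
        rw [this]
        simp [add_assoc]
      rw [hgα, hhα', sub_self]
    · simp
  rw [← key, Finset.sum_sub_distrib]
  abel

noncomputable def mM (f : Polynomial ℂ) : Matrix (Fin f.natDegree) (Fin f.natDegree) ℂ :=
  fun i k => (if (i:ℕ)+1 = (k:ℕ) then (1:ℂ) else 0)
    + (if (i:ℕ) = f.natDegree - 1 then -f.coeff (k:ℕ) else 0)

lemma horner_range (f : Polynomial ℂ) (k : Fin f.natDegree) :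
    hornerPoly f k = ∑ j ∈ Finset.range f.natDegree,
      Polynomial.C (f.coeff ((k:ℕ) + j + 1)) * Polynomial.X ^ j :=
  Fin.sum_univ_eq_sum_range (fun j => Polynomial.C (f.coeff ((k:ℕ) + j + 1)) * Polynomial.X ^ j) _

lemma horner_last (f : Polynomial ℂ) (hf : f.Monic) (hd : 1 ≤ f.natDegree) :
    hornerPoly f ⟨f.natDegree - 1, by omega⟩ = 1 := by
  rw [horner_range]
  obtain ⟨e, he⟩ : ∃ e, f.natDegree = e + 1 := ⟨f.natDegree - 1, by omega⟩
  rw [show Finset.range f.natDegree = Finset.range (e+1) from by rw [he]]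
  rw [Finset.sum_range_succ' (fun j => Polynomial.C (f.coeff (f.natDegree - 1 + j + 1)) * Polynomial.X ^ j)]
  have h0 : f.natDegree - 1 + 0 + 1 = f.natDegree := by omega
  have hz : ∀ j ∈ Finset.range e,
      Polynomial.C (f.coeff (f.natDegree - 1 + (j+1) + 1)) * Polynomial.X ^ (j+1) = 0 := by
    intro j _
    rw [Polynomial.coeff_eq_zero_of_natDegree_lt (by omega)]
    simp
  rw [Finset.sum_congr rfl hz]
  simp [h0, hf.coeff_natDegree]

lemma horner_mul_zero (f : Polynomial ℂ) (hd : 1 ≤ f.natDegree) :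
    Polynomial.X * hornerPoly f ⟨0, by omega⟩ = f - Polynomial.C (f.coeff 0) := by
  rw [horner_range, eq_sub_iff_add_eq]
  conv_rhs => rw [f.as_sum_range' (f.natDegree + 1) (by omega)]
  simp only [← Polynomial.C_mul_X_pow_eq_monomial]
  rw [Finset.sum_range_succ' (fun i => Polynomial.C (f.coeff i) * Polynomial.X ^ i)]
  rw [Finset.mul_sum]
  simp only [Fin.val_mk, zero_add, pow_zero, mul_one]
  congr 1
  apply Finset.sum_congr rfl
  intro j _
  ring

lemma horner_mul (f : Polynomial ℂ) (k : Fin f.natDegree) (hk : 1 ≤ (k:ℕ)) :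
    Polynomial.X * hornerPoly f k
      = hornerPoly f ⟨(k:ℕ) - 1, by omega⟩ - Polynomial.C (f.coeff (k:ℕ)) := by
  rw [horner_range, horner_range]
  obtain ⟨e, he⟩ : ∃ e, f.natDegree = e + 1 := ⟨f.natDegree - 1, by have := k.isLt; omega⟩
  rw [show Finset.range f.natDegree = Finset.range (e+1) from by rw [he]]
  rw [Finset.mul_sum]
  rw [Finset.sum_range_succ (fun j => Polynomial.X * (Polynomial.C (f.coeff ((k:ℕ) + j + 1)) * Polynomial.X ^ j)),
      Finset.sum_range_succ' (fun j => Polynomial.C (f.coeff ((k:ℕ) - 1 + j + 1)) * Polynomial.X ^ j)]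
  have htop : f.coeff ((k:ℕ) + e + 1) = 0 :=
    Polynomial.coeff_eq_zero_of_natDegree_lt (by omega)
  have h0 : (k:ℕ) - 1 + 0 + 1 = (k:ℕ) := by omega
  rw [htop, h0]
  simp only [map_zero, zero_mul, mul_zero, add_zero, pow_zero, mul_one]
  rw [add_sub_cancel_right]
  apply Finset.sum_congr rfl
  intro j _
  have : (k:ℕ) - 1 + (j+1) + 1 = (k:ℕ) + j + 1 := by omega
  rw [this]
  ring

lemma hroot (f : Polynomial ℂ) (hf : f.Monic) (hd : 1 ≤ f.natDegree)
    (b : Module.Basis (Fin f.natDegree) ℂ (AdjoinRoot f))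
    (hb : ∀ k, b k = AdjoinRoot.mk f (hornerPoly f k)) (k : Fin f.natDegree) :
    (AdjoinRoot.root f) * b k = ∑ i, mM f i k • b i := by
  have hsum : ∑ i, mM f i k • b i
      = (∑ i : Fin f.natDegree, (if (i:ℕ)+1 = (k:ℕ) then (1:ℂ) else 0) • b i)
        + ∑ i : Fin f.natDegree, (if (i:ℕ) = f.natDegree - 1 then -f.coeff (k:ℕ) else 0) • b i := by
    rw [← Finset.sum_add_distrib]
    exact Finset.sum_congr rfl fun i _ => by simp only [mM]; rw [add_smul]
  have hlastsum : (∑ i : Fin f.natDegree,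
      (if (i:ℕ) = f.natDegree - 1 then -f.coeff (k:ℕ) else 0) • b i)
      = (-f.coeff (k:ℕ)) • b ⟨f.natDegree - 1, by omega⟩ := by
    rw [Finset.sum_eq_single (⟨f.natDegree - 1, by omega⟩ : Fin f.natDegree)]
    · simp
    · intro c _ hc
      have : (c:ℕ) ≠ f.natDegree - 1 := fun h0 => hc (by ext; simpa using h0)
      simp [this]
    · simp
  have hmkC : ∀ c : ℂ, AdjoinRoot.mk f (Polynomial.C c) = c • (1 : AdjoinRoot f) := by
    intro c
    rw [AdjoinRoot.mk_C, ← AdjoinRoot.algebraMap_eq, Algebra.algebraMap_eq_smul_one]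
  have hone : (1 : AdjoinRoot f) = b ⟨f.natDegree - 1, by omega⟩ := by
    rw [hb, horner_last f hf hd, map_one]
  rw [hsum, hlastsum, hb k, ← AdjoinRoot.mk_X (f := f), ← map_mul]
  by_cases hk : (k:ℕ) = 0
  · have hk0 : k = ⟨0, by omega⟩ := by ext; simpa using hk
    rw [hk0]
    rw [horner_mul_zero f hd, map_sub, AdjoinRoot.mk_self, zero_sub, hmkC, ← hone]
    have hz : (∑ i : Fin f.natDegree, (if (i:ℕ)+1 = ((⟨0, by omega⟩ : Fin f.natDegree):ℕ) then (1:ℂ) else 0) • b i) = 0 := by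
      apply Finset.sum_eq_zero
      intro i _
      simp
    rw [hz, zero_add, neg_smul]
  · have hk1 : 1 ≤ (k:ℕ) := by omega
    rw [horner_mul f k hk1, map_sub, hmkC, ← hone]
    have hfirst : (∑ i : Fin f.natDegree, (if (i:ℕ)+1 = (k:ℕ) then (1:ℂ) else 0) • b i)
        = b ⟨(k:ℕ) - 1, by omega⟩ := by
      rw [Finset.sum_eq_single (⟨(k:ℕ) - 1, by omega⟩ : Fin f.natDegree)]
      · simp [hk1, Nat.sub_add_cancel hk1]
      · intro c _ hc
        have : (c:ℕ) + 1 ≠ (k:ℕ) := fun h0 => hc (by ext; simp; omega)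
        simp [this]
      · simp
    rw [hfirst, hb, neg_smul, sub_eq_add_neg]

lemma coeff_shift_deg (f : Polynomial ℂ) (hf : f.Monic) (α : ℕ) :
    f.coeff (α + f.natDegree) = if α = 0 then 1 else 0 := by
  by_cases h : α = 0
  · simp [h, hf.coeff_natDegree]
  · rw [if_neg h]
    exact Polynomial.coeff_eq_zero_of_natDegree_lt (by omega)

lemma b1M_mul_mM (f : Polynomial ℂ) (hf : f.Monic) (hd : 1 ≤ f.natDegree) :
    b1M f * mM f = bxM f := by
  ext α k
  rw [Matrix.mul_apply]
  simp only [b1M, mM, bxM, mul_add]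
  rw [Finset.sum_add_distrib]
  have h2 : (∑ γ : Fin f.natDegree,
      f.coeff ((α:ℕ)+(γ:ℕ)+1) * (if (γ:ℕ) = f.natDegree - 1 then -f.coeff (k:ℕ) else 0))
      = f.coeff ((α:ℕ) + f.natDegree) * (-f.coeff (k:ℕ)) := by
    rw [Finset.sum_eq_single (⟨f.natDegree - 1, by omega⟩ : Fin f.natDegree)]
    · simp only [Fin.val_mk, if_pos rfl]
      congr 2
      omega
    · intro c _ hc
      have : (c:ℕ) ≠ f.natDegree - 1 := fun h0 => hc (by ext; simpa using h0)
      simp [this]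
    · simp
  rw [h2, coeff_shift_deg f hf]
  by_cases hk : (k:ℕ) = 0
  · have h1 : (∑ γ : Fin f.natDegree,
        f.coeff ((α:ℕ)+(γ:ℕ)+1) * (if (γ:ℕ)+1 = (k:ℕ) then (1:ℂ) else 0)) = 0 := by
      apply Finset.sum_eq_zero
      intro γ _
      rw [if_neg (by omega), mul_zero]
    rw [h1, hk, zero_add]
    by_cases hα : (α:ℕ) = 0 <;> simp [hα]
  · have hk1 : 1 ≤ (k:ℕ) := by omega
    have h1 : (∑ γ : Fin f.natDegree,
        f.coeff ((α:ℕ)+(γ:ℕ)+1) * (if (γ:ℕ)+1 = (k:ℕ) then (1:ℂ) else 0)) =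
        f.coeff ((α:ℕ)+(k:ℕ)) := by
      rw [Finset.sum_eq_single (⟨(k:ℕ)-1, by have := k.isLt; omega⟩ : Fin f.natDegree)]
      · simp only [Fin.val_mk]
        rw [if_pos (by omega), mul_one]
        congr 1
        omega
      · intro c _ hc
        have : (c:ℕ)+1 ≠ (k:ℕ) := fun h0 => hc (by ext; simp; omega)
        simp [this]
      · simp
    rw [h1]
    by_cases hα : (α:ℕ) = 0
    · simp [hα, hk]
    · simp [hα, hk]

lemma comp_mul_b1M (f : Polynomial ℂ) (hf : f.Monic) (hd : 1 ≤ f.natDegree) :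
    companionMatrix f * b1M f = bxM f := by
  ext i β
  rw [Matrix.mul_apply]
  have hentry : ∀ j : Fin f.natDegree, companionMatrix f i j * b1M f j β
      = (if (j:ℕ) = f.natDegree - 1 then -f.coeff (i:ℕ) * f.coeff ((j:ℕ)+(β:ℕ)+1) else 0)
        + (if (j:ℕ) ≠ f.natDegree - 1 ∧ (i:ℕ) = (j:ℕ)+1
            then f.coeff ((j:ℕ)+(β:ℕ)+1) else 0) := by
    intro j
    simp only [companionMatrix, b1M, Matrix.of_apply, hf.leadingCoeff, div_one]
    by_cases h1 : (j:ℕ) = f.natDegree - 1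
    · simp [h1, neg_mul]
    · by_cases h2 : (i:ℕ) = (j:ℕ)+1 <;> simp [h1, h2]
  rw [Finset.sum_congr rfl (fun j _ => hentry j), Finset.sum_add_distrib]
  have hA : (∑ j : Fin f.natDegree, (if (j:ℕ) = f.natDegree - 1
      then -f.coeff (i:ℕ) * f.coeff ((j:ℕ)+(β:ℕ)+1) else 0))
      = -f.coeff (i:ℕ) * f.coeff ((β:ℕ) + f.natDegree) := by
    rw [Finset.sum_eq_single (⟨f.natDegree - 1, by omega⟩ : Fin f.natDegree)]
    · simp only [Fin.val_mk, if_pos rfl]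
      rw [show f.natDegree - 1 + (β:ℕ) + 1 = (β:ℕ) + f.natDegree from by omega]
      simp
    · intro c _ hc
      have : (c:ℕ) ≠ f.natDegree - 1 := fun h0 => hc (by ext; simpa using h0)
      simp [this]
    · simp
  rw [hA, coeff_shift_deg f hf]
  by_cases hi : (i:ℕ) = 0
  · have hB : (∑ j : Fin f.natDegree, (if (j:ℕ) ≠ f.natDegree - 1 ∧ (i:ℕ) = (j:ℕ)+1
        then f.coeff ((j:ℕ)+(β:ℕ)+1) else 0)) = 0 :=
      Finset.sum_eq_zero fun j _ => by rw [if_neg (fun h => absurd h.2 (by omega))]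
    rw [hB]
    by_cases hβ : (β:ℕ) = 0 <;> simp [bxM, hi, hβ]
  · have hi1 : 1 ≤ (i:ℕ) := by omega
    have hii : (i:ℕ) - 1 < f.natDegree := by have := i.isLt; omega
    have hine : (i:ℕ) - 1 ≠ f.natDegree - 1 := by have := i.isLt; omega
    have hB : (∑ j : Fin f.natDegree, (if (j:ℕ) ≠ f.natDegree - 1 ∧ (i:ℕ) = (j:ℕ)+1
        then f.coeff ((j:ℕ)+(β:ℕ)+1) else 0)) = f.coeff ((i:ℕ)+(β:ℕ)) := by
      rw [Finset.sum_eq_single (⟨(i:ℕ)-1, hii⟩ : Fin f.natDegree)]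
      · simp only [Fin.val_mk]
        rw [if_pos ⟨hine, by omega⟩]
        congr 1
        omega
      · intro c _ hc
        have : ¬((c:ℕ) ≠ f.natDegree - 1 ∧ (i:ℕ) = (c:ℕ)+1) := by
          intro ⟨_, h2⟩
          exact hc (by ext; simp; omega)
        simp [this]
      · simp
    rw [hB]
    by_cases hβ : (β:ℕ) = 0 <;> simp [bxM, hi, hβ, add_comm]

lemma b1M_det_isUnit (f : Polynomial ℂ) (hf : f.Monic) (hd : 1 ≤ f.natDegree) :
    IsUnit (b1M f).det := by
  have hU : ((b1M f).submatrix id Fin.rev).det = 1 := by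
    have htri : ((b1M f).submatrix id Fin.rev).BlockTriangular id := by
      intro i j hij
      simp only [Matrix.submatrix_apply, id] at hij ⊢
      apply Polynomial.coeff_eq_zero_of_natDegree_lt
      have h1 : (j.rev : ℕ) = f.natDegree - ((j:ℕ) + 1) := Fin.val_rev j
      have h2 : (j:ℕ) < (i:ℕ) := hij
      have := j.isLt
      simp only [b1M, h1]
      omega
    rw [Matrix.det_of_upperTriangular htri]
    apply Finset.prod_eq_one
    intro i _
    simp only [Matrix.submatrix_apply, id, b1M]
    have h1 : (i:ℕ) + (i.rev : ℕ) + 1 = f.natDegree := by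
      have h2 : (i.rev : ℕ) = f.natDegree - ((i:ℕ) + 1) := Fin.val_rev i
      have := i.isLt
      omega
    rw [h1, hf.coeff_natDegree]
  have hfact : b1M f * (1 : Matrix (Fin f.natDegree) (Fin f.natDegree) ℂ).submatrix id Fin.rev
      = (b1M f).submatrix id Fin.rev := by
    ext i j
    rw [Matrix.mul_apply]
    simp only [Matrix.submatrix_apply, id, Matrix.one_apply, mul_ite, mul_one, mul_zero]
    rw [Finset.sum_ite_eq' Finset.univ (Fin.rev j) (fun k => b1M f i k)]
    simp
  rw [← hfact, Matrix.det_mul] at hU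
  exact IsUnit.of_mul_eq_one _ hU

end Aux

theorem barnett_horner_basis (f : Polynomial ℂ) (hf : f.Monic) (hd : 1 ≤ f.natDegree)
    (δ1 δx : MvPolynomial (Fin 2) ℂ)
    (hδ1 : (X 0 - X 1) * δ1 = Polynomial.aeval (X 0) f - Polynomial.aeval (X 1) f)
    (hδx : (X 0 - X 1) * δx =
      Polynomial.aeval (X 0) f * X 1 - Polynomial.aeval (X 1) f * X 0)
    (B1 Bx : Matrix (Fin f.natDegree) (Fin f.natDegree) ℂ)
    (hB1 : δ1 = ∑ α : Fin f.natDegree, ∑ β : Fin f.natDegree,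
      MvPolynomial.C (B1 α β) * X 0 ^ (α : ℕ) * X 1 ^ (β : ℕ))
    (hBx : δx = ∑ α : Fin f.natDegree, ∑ β : Fin f.natDegree,
      MvPolynomial.C (Bx α β) * X 0 ^ (α : ℕ) * X 1 ^ (β : ℕ))
    (b : Module.Basis (Fin f.natDegree) ℂ (AdjoinRoot f))
    (hb : ∀ k, b k = AdjoinRoot.mk f (hornerPoly f k)) :
    LinearMap.toMatrix b b (LinearMap.mulLeft ℂ (AdjoinRoot.root f)) = B1⁻¹ * Bx ∧
      companionMatrix f = B1 * (B1⁻¹ * Bx) * B1⁻¹ := by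
  -- identify B1 with the explicit Hankel matrix
  have hδ1' : δ1 = ∑ α : Fin f.natDegree, ∑ β : Fin f.natDegree,
      C (b1M f α β) * X (0:Fin 2) ^ (α:ℕ) * X 1 ^ (β:ℕ) := by
    apply cancelX
    rw [hδ1]
    rw [show (∑ α : Fin f.natDegree, ∑ β : Fin f.natDegree,
      C (b1M f α β) * X (0:Fin 2) ^ (α:ℕ) * X 1 ^ (β:ℕ)) = ∑ α : Fin f.natDegree, ∑ β : Fin f.natDegree,
      C (f.coeff ((α:ℕ)+(β:ℕ)+1)) * X (0:Fin 2) ^ (α:ℕ) * X 1 ^ (β:ℕ) from rfl]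
    rw [S1_spec f]
  have hB1e : B1 = b1M f := matrix_of_sum_eq B1 (b1M f) (hB1.symm.trans hδ1')
  -- identify Bx with the explicit matrix
  have hSx : (X 0 - X 1) * (∑ α : Fin f.natDegree, ∑ β : Fin f.natDegree,
      C (bxM f α β) * X (0:Fin 2) ^ (α:ℕ) * X 1 ^ (β:ℕ))
      = Polynomial.aeval (X 0) f * X 1 - Polynomial.aeval (X 1) f * X 0 := by
    rw [SxSum_eq f hd]
    linear_combination (X 1 : MvPolynomial (Fin 2) ℂ) * S1_spec f
  have hδx' : δx = ∑ α : Fin f.natDegree, ∑ β : Fin f.natDegree,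
      C (bxM f α β) * X (0:Fin 2) ^ (α:ℕ) * X 1 ^ (β:ℕ) := by
    apply cancelX
    rw [hδx, hSx]
  have hBxe : Bx = bxM f := matrix_of_sum_eq Bx (bxM f) (hBx.symm.trans hδx')
  -- invertibility of B1
  have hu : IsUnit B1.det := by rw [hB1e]; exact b1M_det_isUnit f hf hd
  have hinv1 : B1⁻¹ * B1 = 1 := Matrix.nonsing_inv_mul _ hu
  have hinv2 : B1 * B1⁻¹ = 1 := Matrix.mul_nonsing_inv _ hu
  -- the multiplication operator in the Horner basis
  have hM : LinearMap.toMatrix b b (LinearMap.mulLeft ℂ (AdjoinRoot.root f)) = mM f := by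
    ext i k
    rw [LinearMap.toMatrix_apply, LinearMap.mulLeft_apply, hroot f hf hd b hb k,
      Module.Basis.repr_sum_self]
  have hBM : B1 * mM f = Bx := by rw [hB1e, hBxe]; exact b1M_mul_mM f hf hd
  have hfirst : LinearMap.toMatrix b b (LinearMap.mulLeft ℂ (AdjoinRoot.root f)) = B1⁻¹ * Bx := by
    rw [hM, ← hBM, ← Matrix.mul_assoc, hinv1, Matrix.one_mul]
  refine ⟨hfirst, ?_⟩
  have hcomp : companionMatrix f * B1 = Bx := by
    rw [hB1e, hBxe]; exact comp_mul_b1M f hf hd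
  rw [← Matrix.mul_assoc, Matrix.mul_assoc B1 B1⁻¹ Bx, ← Matrix.mul_assoc B1, hinv2,
    Matrix.one_mul, ← hcomp, Matrix.mul_assoc, hinv2, Matrix.mul_one]
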